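/- Let n ≥ 1 and for all integers p, q ≥ 0 let p̃_pq ∈ H̃^{pq}. Suppose that the series Σ_{p,q≥0} S_pq(|z|²) p̃_pq(z,z̄) converges uniformly on compact subsets of B_n. Then for every t ∈ ℂ, the series Σ_{p,q≥0} [4pq+(2n-2)(p+q)+1]^t S_pq(|z|²) p̃_pq(z,z̄) converges absolutely and uniformly on compact subsets of B_n. -/

import Mathlib

open MeasureTheory ENNReal NNReal

/-- Pochhammer symbol `(a)_k = Γ(a+k)/Γ(a)`. -/
noncomputable def poch (a : ℝ) (k : ℕ) : ℝ := Real.Gamma (a + k) / Real.Gamma a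

/-- Gauss hypergeometric function `₂F₁(a,b;c;t)`, as a sum of its series. -/
noncomputable def hyp2F1 (a b c t : ℝ) : ℝ :=
  ∑' k : ℕ, (poch a k * poch b k) / (poch c k * (Nat.factorial k)) * t ^ k

/-- `S_pq(t)`. -/
noncomputable def Spq (n p q : ℕ) (t : ℝ) : ℝ :=
  (Real.Gamma (n + p) * Real.Gamma (n + q)) / (Real.Gamma n * Real.Gamma ((n : ℝ) + p + q)) *
    hyp2F1 p q ((p : ℝ) + q + n) t

/-- `c_pq(s)`. -/
noncomputable def cpq (n p q : ℕ) (s : ℝ) : ℝ :=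
  poch (s + 1) n / Real.Gamma n *
    ∫ t in Set.Ioo (0:ℝ) 1, t ^ ((p : ℝ) + q + n - 1) * (1 - t) ^ s * (Spq n p q t) ^ 2
noncomputable instance (n : ℕ) : MeasurableSpace (EuclideanSpace ℂ (Fin n)) := borel _
instance (n : ℕ) : BorelSpace (EuclideanSpace ℂ (Fin n)) := ⟨rfl⟩
/-- Lebesgue measure on `ℂⁿ`. -/
noncomputable instance (n : ℕ) : MeasureSpace (EuclideanSpace ℂ (Fin n)) :=
  ⟨Measure.map (⇑(PiLp.continuousLinearEquiv 2 ℝ (fun _ : Fin n => ℂ)).symm) volume⟩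

abbrev En (n : ℕ) := EuclideanSpace ℂ (Fin n)

/-- Wirtinger derivative `∂f/∂z_j`. -/
noncomputable def wd (n : ℕ) (j : Fin n) (f : En n → ℂ) (z : En n) : ℂ :=
  (1/2 : ℂ) * (fderiv ℝ f z (EuclideanSpace.single j 1) -
    Complex.I * fderiv ℝ f z (EuclideanSpace.single j Complex.I))

/-- Wirtinger derivative `∂f/∂z̄_j`. -/
noncomputable def wdb (n : ℕ) (j : Fin n) (f : En n → ℂ) (z : En n) : ℂ :=
  (1/2 : ℂ) * (fderiv ℝ f z (EuclideanSpace.single j 1) +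
    Complex.I * fderiv ℝ f z (EuclideanSpace.single j Complex.I))

/-- The complex-tangential field `L_{jk} = z̄_j ∂/∂z_k − z̄_k ∂/∂z_j`. -/
noncomputable def Lop (n : ℕ) (j k : Fin n) (f : En n → ℂ) : En n → ℂ :=
  fun z => (starRingEnd ℂ) (z j) * wd n k f z - (starRingEnd ℂ) (z k) * wd n j f z

/-- The complex-tangential field `L̄_{jk} = z_j ∂/∂z̄_k − z_k ∂/∂z̄_j`. -/
noncomputable def Lbarop (n : ℕ) (j k : Fin n) (f : En n → ℂ) : En n → ℂ :=
  fun z => z j * wdb n k f z - z k * wdb n j f z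

/-- `□ = −Σ_{j,k} (L_{jk}L̄_{jk} + L̄_{jk}L_{jk})`. -/
noncomputable def BoxOp (n : ℕ) (f : En n → ℂ) : En n → ℂ :=
  fun z => -∑ j : Fin n, ∑ k : Fin n, (Lop n j k (Lbarop n j k f) z + Lbarop n j k (Lop n j k f) z)

/-- `f` is `M`-harmonic on the unit ball (of smoothness class `m`):
`Δ̃f = 4(1-|z|²) Σ_{j,k}(δ_{jk} - z_j z̄_k) ∂²f/∂z_j∂z̄_k = 0` on the ball. -/
def MHarm (n : ℕ) (m : ℕ∞) (f : En n → ℂ) : Prop :=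
  ContDiffOn ℝ m f (Metric.ball 0 1) ∧
  ∀ z ∈ Metric.ball (0 : En n) 1,
    (4 : ℂ) * (1 - (‖z‖ : ℂ) ^ 2) *
      ∑ j : Fin n, ∑ k : Fin n,
        ((if j = k then 1 else 0) - z j * (starRingEnd ℂ) (z k)) * wd n j (wdb n k f) z = 0

/-- `‖f‖²_s = ∫_{B_n} |f|² dμ_s` as an extended real. -/
noncomputable def nsqE (n : ℕ) (s : ℝ) (f : En n → ℂ) : ℝ≥0∞ :=
  ∫⁻ z in Metric.ball (0 : En n) 1,
    ENNReal.ofReal (poch (s + 1) n / Real.pi ^ n * (1 - ‖z‖ ^ 2) ^ s * ‖f z‖ ^ 2)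

/-- `‖f‖²_s = ∫_{B_n} |f|² dμ_s` as a real number. -/
noncomputable def normSqS (n : ℕ) (s : ℝ) (f : En n → ℂ) : ℝ :=
  ∫ z in Metric.ball (0 : En n) 1,
    poch (s + 1) n / Real.pi ^ n * (1 - ‖z‖ ^ 2) ^ s * ‖f z‖ ^ 2

/-- The normalized surface measure `σ` on the unit sphere `∂B_n`. -/
noncomputable def sphMeas (n : ℕ) : Measure (Metric.sphere (0 : En n) 1) :=
  ((volume : Measure (En n)).toSphere Set.univ)⁻¹ • (volume : Measure (En n)).toSphere

/-- `‖g‖²_{∂B_n} = ∫_{∂B_n} |g|² dσ`. -/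
noncomputable def normSqSphere (n : ℕ) (g : En n → ℂ) : ℝ :=
  ∫ ζ : Metric.sphere (0 : En n) 1, ‖g (ζ : En n)‖ ^ 2 ∂ sphMeas n

/-- Membership in `H̃^{pq}`: `P` is a polynomial in `z, z̄`, homogeneous of bidegree `(p,q)`,
and harmonic for the Euclidean Laplacian `Δ = 4 Σ_j ∂²/∂z_j∂z̄_j` on `ℝ^{2n}`. -/
def InHtilde (n : ℕ) (p q : ℕ) (P : En n → ℂ) : Prop :=
  (∃ Q : MvPolynomial (Fin n ⊕ Fin n) ℂ,
    (∀ z : En n,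
      P z = MvPolynomial.eval (Sum.elim (fun j => z j) (fun j => (starRingEnd ℂ) (z j))) Q) ∧
    ∀ d ∈ Q.support,
      (∑ j : Fin n, d (Sum.inl j)) = p ∧ (∑ j : Fin n, d (Sum.inr j)) = q) ∧
  ∀ z : En n, ∑ j : Fin n, wd n j (wdb n j P) z = 0


noncomputable def hcoef (a b c : ℝ) (k : ℕ) : ℝ :=
  (poch a k * poch b k) / (poch c k * (Nat.factorial k))
lemma hyp2F1_eq (a b c t : ℝ) : hyp2F1 a b c t = ∑' k : ℕ, hcoef a b c k * t ^ k := rfl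
lemma poch_pos {a : ℝ} (ha : 0 < a) (k : ℕ) : 0 < poch a k :=
  div_pos (Real.Gamma_pos_of_pos (by positivity)) (Real.Gamma_pos_of_pos ha)
lemma poch_succ {a : ℝ} (ha : 0 < a) (k : ℕ) : poch a (k + 1) = poch a k * (a + k) := by
  unfold poch
  have h : a + ((k : ℕ) + 1 : ℕ) = (a + k) + 1 := by push_cast; ring
  rw [h, Real.Gamma_add_one (by positivity)]
  ring
lemma poch_zero (k : ℕ) : poch 0 k = 0 := by
  unfold poch; rw [Real.Gamma_zero, _root_.div_zero]
lemma hcoef_pos {a b c : ℝ} (ha : 0 < a) (hb : 0 < b) (hc : 0 < c) (k : ℕ) :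
    0 < hcoef a b c k := by
  have := poch_pos ha k; have := poch_pos hb k; have := poch_pos hc k
  have : (0:ℝ) < (Nat.factorial k : ℝ) := by positivity
  unfold hcoef; positivity
lemma hcoef_succ {a b c : ℝ} (ha : 0 < a) (hb : 0 < b) (hc : 0 < c) (k : ℕ) :
    hcoef a b c (k + 1) =
      hcoef a b c k * ((a + k) * (b + k) / ((c + k) * (k + 1))) := by
  unfold hcoef
  rw [poch_succ ha, poch_succ hb, poch_succ hc, Nat.factorial_succ]
  have h1 : poch c k ≠ 0 := ne_of_gt (poch_pos hc k)
  have h2 : ((Nat.factorial k : ℕ) : ℝ) ≠ 0 := by positivity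
  have h3 : c + (k:ℝ) ≠ 0 := by positivity
  have h4 : ((k:ℝ) + 1) ≠ 0 := by positivity
  push_cast
  field_simp

lemma ratio_le {a b c : ℝ} (ha : 0 < a) (hb : 0 < b) (hc : 1 ≤ c)
    (hab : a + b ≤ c + 1) (k : ℕ) :
    (a + k) * (b + k) / ((c + k) * (k + 1)) ≤ 1 + a * b / (k + 1) := by
  have hk : (0:ℝ) ≤ k := Nat.cast_nonneg k
  have hden : (0:ℝ) < (c + k) * (k + 1) := by positivity
  rw [div_le_iff₀ hden]
  have h1 : (1 + a * b / (k + 1)) * ((c + k) * (k + 1))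
      = (c + k) * (k + 1) + a * b * (c + k) := by
    field_simp
  rw [h1]
  nlinarith [mul_nonneg (mul_nonneg ha.le hb.le) (show (0:ℝ) ≤ c + k - 1 by linarith),
    mul_nonneg (show (0:ℝ) ≤ c + 1 - (a + b) by linarith) hk]

lemma hseries_summable {a b c t : ℝ} (ha : 0 < a) (hb : 0 < b) (hc : 1 ≤ c)
    (hab : a + b ≤ c + 1) (ht0 : 0 ≤ t) (ht1 : t < 1) :
    Summable (fun k : ℕ => hcoef a b c k * t ^ k) := by
  have hc0 : (0:ℝ) < c := lt_of_lt_of_le one_pos hc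
  apply summable_of_ratio_norm_eventually_le (r := (1 + t) / 2) (by linarith)
  rw [Filter.eventually_atTop]
  refine ⟨⌈2 * (a * b) / (1 - t)⌉₊, fun k hk => ?_⟩
  have hk' : 2 * (a * b) / (1 - t) ≤ k := Nat.ceil_le.mp hk
  have hkpos : (0:ℝ) ≤ k := Nat.cast_nonneg k
  have hcoefk := hcoef_pos ha hb hc0 k
  have hcoefk1 := hcoef_pos ha hb hc0 (k+1)
  have hterm : (0:ℝ) ≤ hcoef a b c k * t ^ k := by positivity
  have hterm1 : (0:ℝ) ≤ hcoef a b c (k+1) * t ^ (k+1) := by positivity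
  rw [Real.norm_eq_abs, Real.norm_eq_abs, abs_of_nonneg hterm1,
    abs_of_nonneg hterm, hcoef_succ ha hb hc0, pow_succ]
  have hratio := ratio_le ha hb hc hab k
  have hsmall : t * (1 + a * b / (k + 1)) ≤ (1 + t) / 2 := by
    have h2 : a * b / (k + 1) ≤ (1 - t) / 2 := by
      rw [div_le_div_iff₀ (by positivity) (by norm_num)]
      have : 2 * (a * b) ≤ (1 - t) * k := by
        rw [div_le_iff₀ (by linarith)] at hk'
        linarith
      nlinarith
    nlinarith [mul_nonneg ha.le hb.le]
  have hrat0 : 0 ≤ (a + k) * (b + k) / ((c + k) * (k + 1)) := by positivity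
  calc hcoef a b c k * ((a + ↑k) * (b + ↑k) / ((c + ↑k) * (↑k + 1))) * (t ^ k * t)
      = (hcoef a b c k * t ^ k) * (t * ((a + ↑k) * (b + ↑k) / ((c + ↑k) * (↑k + 1)))) := by ring
    _ ≤ (hcoef a b c k * t ^ k) * (t * (1 + a * b / (k + 1))) := by
        apply mul_le_mul_of_nonneg_left _ hterm
        exact mul_le_mul_of_nonneg_left hratio ht0
    _ ≤ (hcoef a b c k * t ^ k) * ((1 + t) / 2) := mul_le_mul_of_nonneg_left hsmall hterm
    _ = (1 + t) / 2 * (hcoef a b c k * t ^ k) := by ring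

lemma hyp2F1_nonneg {a b c t : ℝ} (ha : 0 < a) (hb : 0 < b) (hc : 1 ≤ c)
    (ht0 : 0 ≤ t) : 0 ≤ hyp2F1 a b c t := by
  rw [hyp2F1_eq]
  apply tsum_nonneg
  intro k
  have := hcoef_pos ha hb (lt_of_lt_of_le one_pos hc) k
  positivity

lemma hyp2F1_mono {a b c t t' : ℝ} (ha : 0 < a) (hb : 0 < b) (hc : 1 ≤ c)
    (hab : a + b ≤ c + 1) (ht0 : 0 ≤ t) (htt' : t ≤ t') (ht'1 : t' < 1) :
    hyp2F1 a b c t ≤ hyp2F1 a b c t' := by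
  rw [hyp2F1_eq, hyp2F1_eq]
  apply Summable.tsum_le_tsum _ (hseries_summable ha hb hc hab ht0 (lt_of_le_of_lt htt' ht'1))
    (hseries_summable ha hb hc hab (le_trans ht0 htt') ht'1)
  intro k
  exact mul_le_mul_of_nonneg_left (pow_le_pow_left₀ ht0 htt' k)
    (le_of_lt (hcoef_pos ha hb (lt_of_lt_of_le one_pos hc) k))


lemma hyp2F1_zero_left (b c t : ℝ) : hyp2F1 0 b c t = 0 := by
  rw [hyp2F1_eq]
  have h : ∀ k : ℕ, hcoef 0 b c k * t ^ k = 0 := by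
    intro k; unfold hcoef; rw [poch_zero]; simp
  simp [h]

lemma hyp2F1_zero_mid (a c t : ℝ) : hyp2F1 a 0 c t = 0 := by
  rw [hyp2F1_eq]
  have h : ∀ k : ℕ, hcoef a 0 c k * t ^ k = 0 := by
    intro k; unfold hcoef; rw [poch_zero]; simp
  simp [h]

lemma Spq_zero_case {n p q : ℕ} (h : p = 0 ∨ q = 0) (t : ℝ) : Spq n p q t = 0 := by
  rcases h with h | h
  · subst h; unfold Spq; rw [Nat.cast_zero, hyp2F1_zero_left, mul_zero]
  · subst h; unfold Spq; rw [Nat.cast_zero, hyp2F1_zero_mid, mul_zero]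

lemma Spq_hyp_cond {n p q : ℕ} (hn : 1 ≤ n) (hp : 1 ≤ p) (hq : 1 ≤ q) :
    (0:ℝ) < p ∧ (0:ℝ) < q ∧ (1:ℝ) ≤ (p : ℝ) + q + n ∧ (p:ℝ) + q ≤ ((p : ℝ) + q + n) + 1 := by
  have h1 : (1:ℝ) ≤ (p:ℝ) := by exact_mod_cast hp
  have h2 : (1:ℝ) ≤ (q:ℝ) := by exact_mod_cast hq
  have h3 : (1:ℝ) ≤ (n:ℝ) := by exact_mod_cast hn
  exact ⟨by linarith, by linarith, by linarith, by linarith⟩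

lemma Spq_pref_nonneg {n p q : ℕ} (hn : 1 ≤ n) :
    0 ≤ (Real.Gamma (n + p) * Real.Gamma (n + q)) /
      (Real.Gamma n * Real.Gamma ((n : ℝ) + p + q)) := by
  have h3 : (1:ℝ) ≤ (n:ℝ) := by exact_mod_cast hn
  have g1 : 0 < Real.Gamma ((n : ℕ) + (p : ℕ) : ℕ) := by
    apply Real.Gamma_pos_of_pos; push_cast; linarith [Nat.cast_nonneg (α := ℝ) p]
  have g2 : 0 < Real.Gamma ((n : ℕ) + (q : ℕ) : ℕ) := by
    apply Real.Gamma_pos_of_pos; push_cast; linarith [Nat.cast_nonneg (α := ℝ) q]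
  have g3 : 0 < Real.Gamma (n : ℕ) := by
    apply Real.Gamma_pos_of_pos; linarith
  have g4 : 0 < Real.Gamma ((n : ℝ) + p + q) := by
    apply Real.Gamma_pos_of_pos
    linarith [Nat.cast_nonneg (α := ℝ) p, Nat.cast_nonneg (α := ℝ) q]
  positivity

lemma Spq_nonneg {n p q : ℕ} (hn : 1 ≤ n) {t : ℝ} (ht0 : 0 ≤ t) :
    0 ≤ Spq n p q t := by
  rcases Nat.eq_zero_or_pos p with hp | hp
  · rw [Spq_zero_case (Or.inl hp)]
  rcases Nat.eq_zero_or_pos q with hq | hq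
  · rw [Spq_zero_case (Or.inr hq)]
  obtain ⟨h1, h2, h3, h4⟩ := Spq_hyp_cond hn hp hq
  exact mul_nonneg (Spq_pref_nonneg hn) (hyp2F1_nonneg h1 h2 h3 ht0)

lemma Spq_mono {n p q : ℕ} (hn : 1 ≤ n) {t t' : ℝ} (ht0 : 0 ≤ t) (htt' : t ≤ t')
    (ht'1 : t' < 1) : Spq n p q t ≤ Spq n p q t' := by
  rcases Nat.eq_zero_or_pos p with hp | hp
  · rw [Spq_zero_case (Or.inl hp), Spq_zero_case (Or.inl hp)]
  rcases Nat.eq_zero_or_pos q with hq | hq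
  · rw [Spq_zero_case (Or.inr hq), Spq_zero_case (Or.inr hq)]
  obtain ⟨h1, h2, h3, h4⟩ := Spq_hyp_cond hn hp hq
  exact mul_le_mul_of_nonneg_left (hyp2F1_mono h1 h2 h3 h4 ht0 htt' ht'1)
    (Spq_pref_nonneg hn)

lemma InHtilde.homog {n p q : ℕ} {P : En n → ℂ} (h : InHtilde n p q P) (c : ℝ) (z : En n) :
    P (c • z) = (c : ℂ) ^ (p + q) * P z := by
  obtain ⟨⟨Q, hQ, hdeg⟩, -⟩ := h
  rw [hQ, hQ, MvPolynomial.eval_eq, MvPolynomial.eval_eq, Finset.mul_sum]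
  refine Finset.sum_congr rfl fun d hd => ?_
  obtain ⟨hp, hq⟩ := hdeg d hd
  have elimeq : ∀ i : Fin n ⊕ Fin n,
      Sum.elim (fun j => (c • z) j) (fun j => (starRingEnd ℂ) ((c • z) j)) i
        = (c : ℂ) * Sum.elim (fun j => z j) (fun j => (starRingEnd ℂ) (z j)) i := by
    rintro (j | j) <;>
      simp [PiLp.smul_apply, Complex.real_smul, map_mul, Complex.conj_ofReal]
  have hsum : ∑ i ∈ d.support, d i = p + q := by
    have h1 : ∑ i ∈ d.support, d i = ∑ i : Fin n ⊕ Fin n, d i :=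
      Finset.sum_subset (Finset.subset_univ _)
        (fun i _ hi => Finsupp.notMem_support_iff.mp hi)
    rw [h1, Fintype.sum_sum_type, hp, hq]
  calc MvPolynomial.coeff d Q * ∏ i ∈ d.support,
        (Sum.elim (fun j => (c • z) j) (fun j => (starRingEnd ℂ) ((c • z) j)) i) ^ d i
      = MvPolynomial.coeff d Q * ∏ i ∈ d.support,
        ((c:ℂ) ^ d i * (Sum.elim (fun j => z j) (fun j => (starRingEnd ℂ) (z j)) i) ^ d i) := by
        congr 1; refine Finset.prod_congr rfl fun i _ => ?_; rw [elimeq i, mul_pow]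
    _ = (c : ℂ) ^ (p + q) * (MvPolynomial.coeff d Q * ∏ i ∈ d.support,
        (Sum.elim (fun j => z j) (fun j => (starRingEnd ℂ) (z j)) i) ^ d i) := by
        rw [Finset.prod_mul_distrib, Finset.prod_pow_eq_pow_sum, hsum]; ring

lemma InHtilde.continuous {n p q : ℕ} {P : En n → ℂ} (h : InHtilde n p q P) :
    Continuous P := by
  obtain ⟨⟨Q, hQ, -⟩, -⟩ := h
  have : P = fun z => MvPolynomial.eval
      (Sum.elim (fun j => z j) (fun j => (starRingEnd ℂ) (z j))) Q := funext hQ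
  rw [this]
  simp only [MvPolynomial.eval_eq]
  apply continuous_finset_sum
  intro d _
  apply Continuous.mul continuous_const
  apply continuous_finset_prod
  intro i _
  apply Continuous.pow
  have hcoord : ∀ j : Fin n, Continuous fun z : En n => z j :=
    fun j => (EuclideanSpace.proj (𝕜 := ℂ) j).continuous
  rcases i with j | j
  · exact hcoord j
  · exact Complex.continuous_conj.comp (hcoord j)

lemma norm_term_eq {n p q : ℕ} (hn : 1 ≤ n) (P : En n → ℂ) {t : ℝ} (ht0 : 0 ≤ t)
    (ht1 : t < 1) (z : En n) :
    ‖(Spq n p q t : ℂ) * P z‖ = Spq n p q t * ‖P z‖ := by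
  rw [norm_mul, Complex.norm_real, Real.norm_eq_abs, abs_of_nonneg (Spq_nonneg hn ht0)]

lemma term_bound {n p q : ℕ} (hn : 1 ≤ n) {P : En n → ℂ} (hP : InHtilde n p q P)
    {r r' C : ℝ} (hr0 : 0 < r) (hrr' : r ≤ r') (hr'1 : r' < 1)
    (hC : ∀ w : En n, ‖w‖ ≤ r' → ‖(Spq n p q (‖w‖ ^ 2) : ℂ) * P w‖ ≤ C)
    {z : En n} (hz : ‖z‖ ≤ r) :
    ‖(Spq n p q (‖z‖ ^ 2) : ℂ) * P z‖ ≤ (r / r') ^ (p + q) * C := by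
  have hr'0 : 0 < r' := lt_of_lt_of_le hr0 hrr'
  have hC0 : 0 ≤ C := le_trans (norm_nonneg _) (hC 0 (by simp [hr'0.le]))
  have hz21 : ‖z‖ ^ 2 < 1 := by nlinarith [norm_nonneg z]
  have hz20 : (0:ℝ) ≤ ‖z‖ ^ 2 := sq_nonneg _
  by_cases hpq : p + q = 0
  · rw [hpq, pow_zero, one_mul]
    exact hC z (le_trans hz hrr')
  by_cases hz0 : z = 0
  · have hP0 : P 0 = 0 := by
      have h := hP.homog 0 0
      rw [smul_zero] at h
      rw [h, Complex.ofReal_zero, zero_pow hpq, zero_mul]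
    rw [hz0, hP0, mul_zero, norm_zero]
    positivity
  · set ρ := ‖z‖ with hρdef
    have hρ : 0 < ρ := norm_pos_iff.mpr hz0
    set c : ℝ := r' / ρ with hcdef
    have hc : 0 < c := div_pos hr'0 hρ
    set w : En n := c • z with hwdef
    have hw : ‖w‖ = r' := by
      rw [hwdef, norm_smul, Real.norm_eq_abs, abs_of_pos hc, hcdef]
      field_simp
      exact hρdef.symm
    have hr'21 : r' ^ 2 < 1 := by nlinarith
    have hPw : P w = (c : ℂ) ^ (p + q) * P z := hP.homog c z
    have hy : ‖P w‖ = c ^ (p + q) * ‖P z‖ := by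
      rw [hPw, norm_mul, norm_pow, Complex.norm_real, Real.norm_eq_abs, abs_of_pos hc]
    have hBy : Spq n p q (r' ^ 2) * ‖P w‖ ≤ C := by
      have h := hC w hw.le
      rwa [norm_term_eq hn P (by positivity) (by rw [hw]; exact hr'21), hw] at h
    have hAB : Spq n p q (ρ ^ 2) ≤ Spq n p q (r' ^ 2) :=
      Spq_mono hn hz20 (by nlinarith) hr'21
    have hA0 : 0 ≤ Spq n p q (ρ ^ 2) := Spq_nonneg hn hz20
    rw [norm_term_eq hn P hz20 hz21]
    have hcp : (0:ℝ) < c ^ (p + q) := pow_pos hc _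
    apply (mul_le_mul_iff_of_pos_right hcp).mp
    have hrρ : 1 ≤ r / ρ := (one_le_div hρ).mpr hz
    calc Spq n p q (ρ ^ 2) * ‖P z‖ * c ^ (p + q)
        = Spq n p q (ρ ^ 2) * ‖P w‖ := by rw [hy]; ring
      _ ≤ Spq n p q (r' ^ 2) * ‖P w‖ := mul_le_mul_of_nonneg_right hAB (norm_nonneg _)
      _ ≤ C := hBy
      _ ≤ (r / ρ) ^ (p + q) * C := le_mul_of_one_le_left hC0 (one_le_pow₀ hrρ)
      _ = ((r / r') * (r' / ρ)) ^ (p + q) * C := by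
          congr 2
          field_simp
      _ = (r / r') ^ (p + q) * C * c ^ (p + q) := by rw [mul_pow, hcdef]; ring

lemma uniform_bound {n : ℕ} (hn : 1 ≤ n) (P : ℕ × ℕ → En n → ℂ)
    (hP : ∀ pq : ℕ × ℕ, InHtilde n pq.1 pq.2 (P pq))
    {r' : ℝ} (hr'0 : 0 < r') (hr'1 : r' < 1) (f : En n → ℂ)
    (hf : TendstoUniformlyOn
      (fun (N : Finset (ℕ × ℕ)) z => ∑ pq ∈ N, (Spq n pq.1 pq.2 (‖z‖ ^ 2) : ℂ) * P pq z)
      f Filter.atTop (Metric.closedBall 0 r')) :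
    ∃ C : ℝ, 0 ≤ C ∧ ∀ pq : ℕ × ℕ, ∀ z : En n, ‖z‖ ≤ r' →
      ‖(Spq n pq.1 pq.2 (‖z‖ ^ 2) : ℂ) * P pq z‖ ≤ C := by
  have hcauchy := hf.uniformCauchySeqOn
  rw [Metric.uniformCauchySeqOn_iff] at hcauchy
  obtain ⟨N₀, hN₀⟩ := hcauchy 1 one_pos
  have hbd : ∀ pq : ℕ × ℕ, ∃ D, ∀ z ∈ Metric.closedBall (0 : En n) r', ‖P pq z‖ ≤ D :=
    fun pq => (isCompact_closedBall _ _).exists_bound_of_continuousOn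
      (hP pq).continuous.continuousOn
  choose D hD using hbd
  set g : ℕ × ℕ → ℝ :=
    fun pq => max 0 (Spq n pq.1 pq.2 (r' ^ 2)) * max 0 (D pq) with hgdef
  have hg0 : ∀ pq, 0 ≤ g pq := fun pq => mul_nonneg (le_max_left _ _) (le_max_left _ _)
  have hr'21 : r' ^ 2 < 1 := by nlinarith
  have hg : ∀ pq : ℕ × ℕ, ∀ z : En n, ‖z‖ ≤ r' →
      ‖(Spq n pq.1 pq.2 (‖z‖ ^ 2) : ℂ) * P pq z‖ ≤ g pq := by
    intro pq z hz
    have hzmem : z ∈ Metric.closedBall (0 : En n) r' := by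
      rwa [Metric.mem_closedBall, dist_zero_right]
    have hz21 : ‖z‖ ^ 2 < 1 := by nlinarith [norm_nonneg z]
    rw [norm_term_eq hn (P pq) (sq_nonneg _) hz21]
    apply mul_le_mul
    · exact le_trans (Spq_mono hn (sq_nonneg _) (by nlinarith [norm_nonneg z]) hr'21)
        (le_max_right _ _)
    · exact le_trans (hD pq z hzmem) (le_max_right _ _)
    · exact norm_nonneg _
    · exact le_max_left _ _
  refine ⟨1 + ∑ pq ∈ N₀, g pq, by positivity, ?_⟩
  intro pq z hz
  have hsum0 : 0 ≤ ∑ pq ∈ N₀, g pq := Finset.sum_nonneg fun i _ => hg0 i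
  by_cases hmem : pq ∈ N₀
  · have h1 := hg pq z hz
    have h2 : g pq ≤ ∑ pq ∈ N₀, g pq := Finset.single_le_sum (fun i _ => hg0 i) hmem
    linarith
  · have hzmem : z ∈ Metric.closedBall (0 : En n) r' := by
      rwa [Metric.mem_closedBall, dist_zero_right]
    have h := hN₀ (insert pq N₀) (Finset.le_iff_subset.mpr (Finset.subset_insert pq N₀))
      N₀ le_rfl z hzmem
    rw [dist_eq_norm, Finset.sum_insert hmem, add_sub_cancel_right] at h
    linarith

lemma geom_poly_summable {ρ : ℝ} (hρ0 : 0 < ρ) (hρ1 : ρ < 1) (m b : ℕ) :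
    Summable (fun k : ℕ => ((k : ℝ) + b) ^ m * ρ ^ k) := by
  have h := summable_pow_mul_geometric_of_norm_lt_one (R := ℝ) m
    (r := ρ) (by rwa [Real.norm_eq_abs, abs_of_pos hρ0])
  have h2 : Summable (fun k : ℕ => ((k + b : ℕ) : ℝ) ^ m * ρ ^ (k + b)) :=
    (_root_.summable_nat_add_iff b).mpr h
  have h3 := h2.mul_right ((ρ ^ b)⁻¹)
  have heq : ∀ k : ℕ, ((k + b : ℕ) : ℝ) ^ m * ρ ^ (k + b) * (ρ ^ b)⁻¹
      = ((k : ℝ) + b) ^ m * ρ ^ k := by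
    intro k
    have hρb : ρ ^ b ≠ 0 := by positivity
    push_cast
    rw [pow_add]
    field_simp
  exact (summable_congr heq).mp h3

lemma majorant_summable {ρ : ℝ} (hρ0 : 0 < ρ) (hρ1 : ρ < 1) (m b : ℕ) :
    Summable (fun pq : ℕ × ℕ =>
      ((pq.1 : ℝ) + b) ^ m * ρ ^ pq.1 * (((pq.2 : ℝ) + b) ^ m * ρ ^ pq.2)) := by
  apply Summable.mul_of_nonneg (geom_poly_summable hρ0 hρ1 m b)
    (geom_poly_summable hρ0 hρ1 m b)
  · intro k; positivity
  · intro k; positivity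

lemma lam_bound (n p q : ℕ) (hn : 1 ≤ n) (t : ℂ) :
    ‖((4 * (p : ℝ) * q + (2 * (n : ℝ) - 2) * ((p : ℝ) + q) + 1 : ℝ) : ℂ) ^ t‖
      ≤ ((p : ℝ) + (2 * n : ℕ)) ^ (⌈2 * max t.re 0⌉₊) *
        ((q : ℝ) + (2 * n : ℕ)) ^ (⌈2 * max t.re 0⌉₊) := by
  set a : ℝ := max t.re 0 with hadef
  set m : ℕ := ⌈2 * a⌉₊ with hmdef
  set lam : ℝ := 4 * (p : ℝ) * q + (2 * (n : ℝ) - 2) * ((p : ℝ) + q) + 1 with hlamdef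
  have hn1 : (1:ℝ) ≤ n := by exact_mod_cast hn
  have hp0 : (0:ℝ) ≤ p := Nat.cast_nonneg p
  have hq0 : (0:ℝ) ≤ q := Nat.cast_nonneg q
  have hlam1 : 1 ≤ lam := by nlinarith
  have hlam0 : 0 < lam := by linarith
  have hcast : ((2 * n : ℕ) : ℝ) = 2 * (n : ℝ) := by push_cast; ring
  rw [hcast]
  set X : ℝ := ((p : ℝ) + 2 * n) * ((q : ℝ) + 2 * n) with hXdef
  have hX1 : 1 ≤ X := by nlinarith
  have hX0 : 0 ≤ X := by linarith
  have h1 : lam ≤ ((p : ℝ) + q + 2 * n) ^ 2 := by nlinarith [sq_nonneg ((p : ℝ) - q)]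
  have h2 : (p : ℝ) + q + 2 * n ≤ X := by nlinarith
  have h20 : (0:ℝ) ≤ (p : ℝ) + q + 2 * n := by linarith
  have hlamX : lam ≤ X ^ 2 := by nlinarith
  have ha0 : 0 ≤ a := le_max_right _ _
  have hnorm : ‖((lam : ℝ) : ℂ) ^ t‖ = lam ^ t.re := by
    rw [Complex.norm_cpow_eq_rpow_re_of_pos hlam0]
  rw [hnorm, ← mul_pow]
  calc lam ^ t.re ≤ lam ^ a := Real.rpow_le_rpow_of_exponent_le hlam1 (le_max_left _ _)
    _ ≤ (X ^ 2) ^ a := Real.rpow_le_rpow hlam0.le hlamX ha0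
    _ = X ^ (2 * a) := by
        rw [← Real.rpow_natCast X 2, ← Real.rpow_mul hX0]
        norm_num
    _ ≤ X ^ (m : ℝ) := Real.rpow_le_rpow_of_exponent_le hX1 (Nat.le_ceil _)
    _ = X ^ m := Real.rpow_natCast X m


/-- Proposition 2.1: if `Σ S_pq(|z|²) p̃_pq` converges uniformly on compact subsets of the
ball, then for every `t ∈ ℂ` the series `Σ [4pq+(2n-2)(p+q)+1]^t S_pq(|z|²) p̃_pq` converges
absolutely and uniformly on compact subsets of the ball. -/
theorem statement9 (n : ℕ) (hn : 1 ≤ n) (P : ℕ × ℕ → En n → ℂ)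
    (hP : ∀ pq : ℕ × ℕ, InHtilde n pq.1 pq.2 (P pq))
    (hconv : ∃ f : En n → ℂ, ∀ K : Set (En n), IsCompact K → K ⊆ Metric.ball 0 1 →
      TendstoUniformlyOn
        (fun (N : Finset (ℕ × ℕ)) z => ∑ pq ∈ N, (Spq n pq.1 pq.2 (‖z‖ ^ 2) : ℂ) * P pq z)
        f Filter.atTop K) :
    ∀ t : ℂ, ∀ K : Set (En n), IsCompact K → K ⊆ Metric.ball 0 1 →
      (∃ g : En n → ℝ, TendstoUniformlyOn
        (fun (N : Finset (ℕ × ℕ)) z => ∑ pq ∈ N,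
          ‖((4 * (pq.1 : ℝ) * pq.2 + (2 * (n : ℝ) - 2) * ((pq.1 : ℝ) + pq.2) + 1 : ℝ) : ℂ) ^ t *
            (Spq n pq.1 pq.2 (‖z‖ ^ 2) : ℂ) * P pq z‖)
        g Filter.atTop K) ∧
      (∃ h : En n → ℂ, TendstoUniformlyOn
        (fun (N : Finset (ℕ × ℕ)) z => ∑ pq ∈ N,
          ((4 * (pq.1 : ℝ) * pq.2 + (2 * (n : ℝ) - 2) * ((pq.1 : ℝ) + pq.2) + 1 : ℝ) : ℂ) ^ t *
            (Spq n pq.1 pq.2 (‖z‖ ^ 2) : ℂ) * P pq z)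
        h Filter.atTop K) := by
  obtain ⟨f, hf⟩ := hconv
  intro t K hK hKsub
  obtain ⟨r, hr0, hr1, hKr⟩ : ∃ r : ℝ, 0 < r ∧ r < 1 ∧ ∀ z ∈ K, ‖z‖ ≤ r := by
    rcases K.eq_empty_or_nonempty with h | hne
    · exact ⟨1/2, by norm_num, by norm_num, by simp [h]⟩
    · obtain ⟨z₀, hz₀K, hmax⟩ := hK.exists_isMaxOn hne continuous_norm.continuousOn
      have h1 : ‖z₀‖ < 1 := mem_ball_zero_iff.mp (hKsub hz₀K)
      exact ⟨max ‖z₀‖ (1/2), lt_of_lt_of_le (by norm_num) (le_max_right _ _),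
        max_lt h1 (by norm_num), fun z hz => le_trans (hmax hz) (le_max_left _ _)⟩
  set r' : ℝ := (r + 1) / 2 with hr'def
  have hrr' : r < r' := by rw [hr'def]; linarith
  have hr'0 : 0 < r' := by rw [hr'def]; linarith
  have hr'1 : r' < 1 := by rw [hr'def]; linarith
  have hfK' := hf (Metric.closedBall 0 r') (isCompact_closedBall _ _)
    (Metric.closedBall_subset_ball hr'1)
  obtain ⟨C, hC0, hC⟩ := uniform_bound hn P hP hr'0 hr'1 f hfK'
  set ρ : ℝ := r / r' with hρdef
  have hρ0 : 0 < ρ := div_pos hr0 hr'0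
  have hρ1 : ρ < 1 := (div_lt_one hr'0).mpr hrr'
  set m : ℕ := ⌈2 * max t.re 0⌉₊ with hmdef
  set u : ℕ × ℕ → ℝ := fun pq =>
    ((pq.1 : ℝ) + (2 * n : ℕ)) ^ m * ρ ^ pq.1 *
      (((pq.2 : ℝ) + (2 * n : ℕ)) ^ m * ρ ^ pq.2) * C with hudef
  have hu : Summable u := (majorant_summable hρ0 hρ1 m (2 * n)).mul_right C
  have hbound : ∀ (pq : ℕ × ℕ), ∀ z ∈ K,
      ‖((4 * (pq.1 : ℝ) * pq.2 + (2 * (n : ℝ) - 2) * ((pq.1 : ℝ) + pq.2) + 1 : ℝ) : ℂ) ^ t *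
        (Spq n pq.1 pq.2 (‖z‖ ^ 2) : ℂ) * P pq z‖ ≤ u pq := by
    intro pq z hz
    have hzr : ‖z‖ ≤ r := hKr z hz
    have hterm : ‖(Spq n pq.1 pq.2 (‖z‖ ^ 2) : ℂ) * P pq z‖ ≤ ρ ^ (pq.1 + pq.2) * C :=
      term_bound hn (hP pq) hr0 hrr'.le hr'1 (fun w hw => hC pq w hw) hzr
    have hlam := lam_bound n pq.1 pq.2 hn t
    rw [mul_assoc, norm_mul]
    have hXm0 : (0:ℝ) ≤ ((pq.1 : ℝ) + (2 * n : ℕ)) ^ m * ((pq.2 : ℝ) + (2 * n : ℕ)) ^ m := by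
      positivity
    calc ‖((4 * (pq.1 : ℝ) * pq.2 + (2 * (n : ℝ) - 2) * ((pq.1 : ℝ) + pq.2) + 1 : ℝ) : ℂ) ^ t‖ *
          ‖(Spq n pq.1 pq.2 (‖z‖ ^ 2) : ℂ) * P pq z‖
        ≤ (((pq.1 : ℝ) + (2 * n : ℕ)) ^ m * ((pq.2 : ℝ) + (2 * n : ℕ)) ^ m) *
          (ρ ^ (pq.1 + pq.2) * C) :=
          mul_le_mul hlam hterm (norm_nonneg _) hXm0
      _ = u pq := by rw [hudef, pow_add]; ring
  refine ⟨⟨_, tendstoUniformlyOn_tsum hu fun pq z hz => ?_⟩,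
    ⟨_, tendstoUniformlyOn_tsum hu fun pq z hz => hbound pq z hz⟩⟩
  rw [Real.norm_eq_abs, abs_of_nonneg (norm_nonneg _)]
  exact hbound pq z hz
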